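/- arXiv:1504.02731 — 3 statements merged into one kernel-verified Lean document; each statement's English description precedes it below -/
import Mathlib

section
/- For every x ∈ ℝ, ∫_ℝ ( 4 sech³((x + y)/√2) − 6 sech⁵((x + y)/√2) ) · sech((y − x)/√2) dy < 0. -/
open MeasureTheory

/-- Hyperbolic secant. -/
noncomputable def sech (x : ℝ) : ℝ := 1 / Real.cosh x

open Real Filter Set in
/-- The "Wronskian" antiderivative used in the integration-by-parts argument. -/
noncomputable def auxW (x y : ℝ) : ℝ :=
  (-3 * Real.sinh ((x + y) / Real.sqrt 2) * Real.cosh ((y - x) / Real.sqrt 2)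
      + Real.cosh ((x + y) / Real.sqrt 2) * Real.sinh ((y - x) / Real.sqrt 2)) /
    (Real.sqrt 2 * Real.cosh ((x + y) / Real.sqrt 2) ^ 4
      * Real.cosh ((y - x) / Real.sqrt 2) ^ 2)

lemma aux_alg (s ca sa cb sb : ℝ) (hs : s ^ 2 = 2) (h1 : ca ^ 2 = sa ^ 2 + 1)
    (h2 : cb ^ 2 = sb ^ 2 + 1) (hca : ca ≠ 0) (hcb : cb ≠ 0) (hs0 : s ≠ 0) :
    (4 * (1 / ca) ^ 3 - 6 * (1 / ca) ^ 5) * (1 / cb) + (1 / ca) ^ 3 * (1 / cb) ^ 3 =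
    ((-3 * (ca * (1 / s)) * cb + -3 * sa * (sb * (1 / s)) + (sa * (1 / s) * sb + ca * (cb * (1 / s)))) * (s * ca ^ 4 * cb ^ 2)
      - (-3 * sa * cb + ca * sb) * (s * (4 * ca ^ 3 * (sa * (1 / s))) * cb ^ 2 + s * ca ^ 4 * (2 * cb ^ 1 * (sb * (1 / s))))) / (s * ca ^ 4 * cb ^ 2) ^ 2 := by
  field_simp
  linear_combination (4*ca^2*cb^2 - 6*cb^2 + ca^2)*hs + (12*cb^2)*h1 + (-2*ca^2)*h2

lemma auxW_hasDerivAt (x y : ℝ) :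
    HasDerivAt (auxW x)
      ((4 * sech ((x + y) / Real.sqrt 2) ^ 3 - 6 * sech ((x + y) / Real.sqrt 2) ^ 5) *
          sech ((y - x) / Real.sqrt 2)
        + sech ((x + y) / Real.sqrt 2) ^ 3 * sech ((y - x) / Real.sqrt 2) ^ 3) y := by
  have hs2 : (0:ℝ) < Real.sqrt 2 := by positivity
  have ha : HasDerivAt (fun y : ℝ => (x + y) / Real.sqrt 2) (1 / Real.sqrt 2) y := by
    simpa using (((hasDerivAt_id y).const_add x).div_const (Real.sqrt 2))
  have hb : HasDerivAt (fun y : ℝ => (y - x) / Real.sqrt 2) (1 / Real.sqrt 2) y := by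
    simpa using (((hasDerivAt_id y).sub_const x).div_const (Real.sqrt 2))
  have hca : HasDerivAt (fun y : ℝ => Real.cosh ((x + y) / Real.sqrt 2))
      (Real.sinh ((x + y) / Real.sqrt 2) * (1 / Real.sqrt 2)) y :=
    (Real.hasDerivAt_cosh _).comp y ha
  have hsa : HasDerivAt (fun y : ℝ => Real.sinh ((x + y) / Real.sqrt 2))
      (Real.cosh ((x + y) / Real.sqrt 2) * (1 / Real.sqrt 2)) y :=
    (Real.hasDerivAt_sinh _).comp y ha
  have hcb : HasDerivAt (fun y : ℝ => Real.cosh ((y - x) / Real.sqrt 2))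
      (Real.sinh ((y - x) / Real.sqrt 2) * (1 / Real.sqrt 2)) y :=
    (Real.hasDerivAt_cosh _).comp y hb
  have hsb : HasDerivAt (fun y : ℝ => Real.sinh ((y - x) / Real.sqrt 2))
      (Real.cosh ((y - x) / Real.sqrt 2) * (1 / Real.sqrt 2)) y :=
    (Real.hasDerivAt_sinh _).comp y hb
  have hnum := ((hsa.const_mul (-3 : ℝ)).mul hcb).add (hca.mul hsb)
  have hden := ((hca.pow 4).const_mul (Real.sqrt 2)).mul (hcb.pow 2)
  have hne : Real.sqrt 2 * Real.cosh ((x + y) / Real.sqrt 2) ^ 4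
      * Real.cosh ((y - x) / Real.sqrt 2) ^ 2 ≠ 0 := by positivity
  have h := hnum.div hden hne
  have h' : HasDerivAt (auxW x) _ y := h
  convert h' using 1
  simp only [sech]
  norm_num
  set s := Real.sqrt 2 with hsdef
  set ca := Real.cosh ((x + y) / s) with hcadef
  set sa := Real.sinh ((x + y) / s) with hsadef
  set cb := Real.cosh ((y - x) / s) with hcbdef
  set sb := Real.sinh ((y - x) / s) with hsbdef
  have hs : s ^ 2 = 2 := Real.sq_sqrt (by norm_num)
  have h1 : ca ^ 2 = sa ^ 2 + 1 := Real.cosh_sq _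
  have h2 : cb ^ 2 = sb ^ 2 + 1 := Real.cosh_sq _
  have hcane : ca ≠ 0 := (Real.cosh_pos _).ne'
  have hcbne : cb ≠ 0 := (Real.cosh_pos _).ne'
  have hs0 : s ≠ 0 := hs2.ne'
  field_simp
  linear_combination (4*ca^2*cb^2 - 6*cb^2 + ca^2)*hs + (12*cb^2)*h1 + (-2*ca^2)*h2

open Real Filter Set in
lemma aux_integrable_exp_abs {c : ℝ} (hc : 0 < c) :
    Integrable (fun y : ℝ => Real.exp (-c * |y|)) := by
  have hIoi : IntegrableOn (fun y : ℝ => Real.exp (-c * |y|)) (Ioi 0) := by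
    refine (exp_neg_integrableOn_Ioi 0 hc).congr_fun (fun y hy => ?_) measurableSet_Ioi
    rw [abs_of_pos hy]
  have hIic : IntegrableOn (fun y : ℝ => Real.exp (-c * |y|)) (Iic 0) := by
    rw [← Measure.map_neg_eq_self (volume : Measure ℝ)]
    have m : MeasurableEmbedding fun x : ℝ => -x := (Homeomorph.neg ℝ).measurableEmbedding
    rw [m.integrableOn_map_iff]
    simp_rw [Function.comp_def, abs_neg, neg_preimage, neg_Iic, neg_zero]
    exact Iff.mpr integrableOn_Ici_iff_integrableOn_Ioi hIoi
  have := hIic.union hIoi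
  rwa [Iic_union_Ioi, integrableOn_univ] at this

lemma sech_pos (t : ℝ) : 0 < sech t := by
  unfold sech; positivity

lemma sech_le_one (t : ℝ) : sech t ≤ 1 := by
  unfold sech
  rw [div_le_one (Real.cosh_pos t)]
  exact Real.one_le_cosh t

open Real Filter Set in
lemma aux_prod_bound (x y : ℝ) :
    sech ((x + y) / Real.sqrt 2) * sech ((y - x) / Real.sqrt 2)
      ≤ 4 * Real.exp (-Real.sqrt 2 * |y|) := by
  have hs2 : (0:ℝ) < Real.sqrt 2 := by positivity
  have hsum : (x + y) / Real.sqrt 2 + (y - x) / Real.sqrt 2 = Real.sqrt 2 * y := by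
    have h2 : Real.sqrt 2 * Real.sqrt 2 = 2 := Real.mul_self_sqrt (by norm_num)
    field_simp
    linear_combination (-y) * h2
  have hprod : Real.cosh ((x + y) / Real.sqrt 2) * Real.cosh ((y - x) / Real.sqrt 2)
      = (Real.cosh (Real.sqrt 2 * y) + Real.cosh ((x + y) / Real.sqrt 2 - (y - x) / Real.sqrt 2)) / 2 := by
    rw [← hsum, Real.cosh_add, Real.cosh_sub]; ring
  have hexp : Real.exp (Real.sqrt 2 * |y|) ≤ 2 * Real.cosh (Real.sqrt 2 * y) := by
    rw [Real.cosh_eq]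
    rcases abs_cases (Real.sqrt 2 * y) with h | h <;>
      · rw [show Real.sqrt 2 * |y| = |Real.sqrt 2 * y| by rw [abs_mul, abs_of_pos hs2]]
        rw [h.1]
        nlinarith [Real.exp_pos (Real.sqrt 2 * y), Real.exp_pos (-(Real.sqrt 2 * y))]
  have hc1 : (1:ℝ) ≤ Real.cosh ((x + y) / Real.sqrt 2 - (y - x) / Real.sqrt 2) :=
    Real.one_le_cosh _
  have hpos1 : (0:ℝ) < Real.cosh ((x + y) / Real.sqrt 2) := Real.cosh_pos _
  have hpos2 : (0:ℝ) < Real.cosh ((y - x) / Real.sqrt 2) := Real.cosh_pos _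
  have key : Real.exp (Real.sqrt 2 * |y|) / 4
      ≤ Real.cosh ((x + y) / Real.sqrt 2) * Real.cosh ((y - x) / Real.sqrt 2) := by
    rw [hprod]
    nlinarith [Real.cosh_pos (Real.sqrt 2 * y)]
  unfold sech
  have hexppos : (0:ℝ) < Real.exp (Real.sqrt 2 * |y|) := Real.exp_pos _
  have hneg : Real.exp (-Real.sqrt 2 * |y|) = 1 / Real.exp (Real.sqrt 2 * |y|) := by
    rw [one_div, ← Real.exp_neg]; ring_nf
  rw [div_mul_div_comm, one_mul, hneg, mul_one_div,
    div_le_div_iff₀ (by positivity) hexppos, one_mul]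
  nlinarith [key]

theorem stmt_15 (x : ℝ) :
    (∫ y, (4 * sech ((x + y) / Real.sqrt 2) ^ 3 - 6 * sech ((x + y) / Real.sqrt 2) ^ 5) *
        sech ((y - x) / Real.sqrt 2)) < 0 := by
  classical
  have hs2 : (0:ℝ) < Real.sqrt 2 := by positivity
  set Φ : ℝ → ℝ := fun y =>
    (4 * sech ((x + y) / Real.sqrt 2) ^ 3 - 6 * sech ((x + y) / Real.sqrt 2) ^ 5) *
      sech ((y - x) / Real.sqrt 2) with hΦ
  set P : ℝ → ℝ := fun y =>
    sech ((x + y) / Real.sqrt 2) ^ 3 * sech ((y - x) / Real.sqrt 2) ^ 3 with hP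
  -- continuity
  have hsech : Continuous sech := by
    unfold sech
    exact continuous_const.div Real.continuous_cosh (fun t => (Real.cosh_pos _).ne')
  have hconta : Continuous fun y : ℝ => (x + y) / Real.sqrt 2 :=
    (continuous_const.add continuous_id).div_const _
  have hcontb : Continuous fun y : ℝ => (y - x) / Real.sqrt 2 :=
    (continuous_id.sub continuous_const).div_const _
  have hcontΦ : Continuous Φ := by
    apply Continuous.mul
    · exact (continuous_const.mul ((hsech.comp hconta).pow 3)).sub
        (continuous_const.mul ((hsech.comp hconta).pow 5))
    · exact hsech.comp hcontb
  have hcontP : Continuous P := ((hsech.comp hconta).pow 3).mul ((hsech.comp hcontb).pow 3)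
  -- integrability
  have hexpint : Integrable (fun y : ℝ => Real.exp (-Real.sqrt 2 * |y|)) :=
    aux_integrable_exp_abs hs2
  have hbndΦ : ∀ y : ℝ, ‖Φ y‖ ≤ 40 * Real.exp (-Real.sqrt 2 * |y|) := by
    intro y
    have h1 := sech_pos ((x + y) / Real.sqrt 2)
    have h2 := sech_pos ((y - x) / Real.sqrt 2)
    have h3 := sech_le_one ((x + y) / Real.sqrt 2)
    have h4 := sech_le_one ((y - x) / Real.sqrt 2)
    have h5 := aux_prod_bound x y
    rw [hΦ, Real.norm_eq_abs, abs_mul, abs_of_pos h2]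
    have hA3 : sech ((x + y) / Real.sqrt 2) ^ 3 ≤ sech ((x + y) / Real.sqrt 2) := pow_le_of_le_one h1.le h3 (by norm_num)
    have hA5 : sech ((x + y) / Real.sqrt 2) ^ 5 ≤ sech ((x + y) / Real.sqrt 2) := pow_le_of_le_one h1.le h3 (by norm_num)
    have hA3p : 0 < sech ((x + y) / Real.sqrt 2) ^ 3 := by positivity
    have hA5p : 0 < sech ((x + y) / Real.sqrt 2) ^ 5 := by positivity
    have h6 : |4 * sech ((x + y) / Real.sqrt 2) ^ 3 - 6 * sech ((x + y) / Real.sqrt 2) ^ 5|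
        ≤ 10 * sech ((x + y) / Real.sqrt 2) := by
      rw [abs_le]
      constructor <;> linarith
    calc |4 * sech ((x + y) / Real.sqrt 2) ^ 3 - 6 * sech ((x + y) / Real.sqrt 2) ^ 5| *
          sech ((y - x) / Real.sqrt 2)
        ≤ (10 * sech ((x + y) / Real.sqrt 2)) * sech ((y - x) / Real.sqrt 2) := by
          exact mul_le_mul_of_nonneg_right h6 h2.le
      _ = 10 * (sech ((x + y) / Real.sqrt 2) * sech ((y - x) / Real.sqrt 2)) := by ring
      _ ≤ 10 * (4 * Real.exp (-Real.sqrt 2 * |y|)) := by linarith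
      _ ≤ 40 * Real.exp (-Real.sqrt 2 * |y|) := by linarith [Real.exp_pos (-Real.sqrt 2 * |y|)]
  have hbndP : ∀ y : ℝ, ‖P y‖ ≤ 4 * Real.exp (-Real.sqrt 2 * |y|) := by
    intro y
    have h1 := sech_pos ((x + y) / Real.sqrt 2)
    have h2 := sech_pos ((y - x) / Real.sqrt 2)
    have h3 := sech_le_one ((x + y) / Real.sqrt 2)
    have h4 := sech_le_one ((y - x) / Real.sqrt 2)
    have h5 := aux_prod_bound x y
    rw [hP, Real.norm_eq_abs, abs_of_pos (by positivity)]
    have hA3 : sech ((x + y) / Real.sqrt 2) ^ 3 ≤ sech ((x + y) / Real.sqrt 2) := pow_le_of_le_one h1.le h3 (by norm_num)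
    have hB3 : sech ((y - x) / Real.sqrt 2) ^ 3 ≤ sech ((y - x) / Real.sqrt 2) := pow_le_of_le_one h2.le h4 (by norm_num)
    have hA3p : 0 < sech ((x + y) / Real.sqrt 2) ^ 3 := by positivity
    have hB3p : 0 < sech ((y - x) / Real.sqrt 2) ^ 3 := by positivity
    nlinarith [mul_le_mul hA3 hB3 hB3p.le h1.le]
  have hintΦ : Integrable Φ := by
    refine (hexpint.const_mul 40).mono hcontΦ.aestronglyMeasurable ?_
    filter_upwards with y
    rw [Real.norm_eq_abs (40 * _), abs_of_pos (by positivity)]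
    exact hbndΦ y
  have hintP : Integrable P := by
    refine (hexpint.const_mul 4).mono hcontP.aestronglyMeasurable ?_
    filter_upwards with y
    rw [Real.norm_eq_abs (4 * _), abs_of_pos (by positivity)]
    exact hbndP y
  -- the derivative identity
  have hderiv : ∀ y : ℝ, HasDerivAt (auxW x) (Φ y + P y) y := fun y => auxW_hasDerivAt x y
  -- limits of auxW at infinity
  have hWbnd : ∀ y : ℝ, ‖auxW x y‖ ≤ 16 * Real.exp (-Real.sqrt 2 * |y|) := by
    intro y
    have h5 := aux_prod_bound x y
    have hca : (1:ℝ) ≤ Real.cosh ((x + y) / Real.sqrt 2) := Real.one_le_cosh _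
    have hcb : (1:ℝ) ≤ Real.cosh ((y - x) / Real.sqrt 2) := Real.one_le_cosh _
    have hsa : |Real.sinh ((x + y) / Real.sqrt 2)| ≤ Real.cosh ((x + y) / Real.sqrt 2) := by
      rw [Real.abs_sinh, ← Real.cosh_abs]
      exact (Real.sinh_lt_cosh _).le
    have hsb : |Real.sinh ((y - x) / Real.sqrt 2)| ≤ Real.cosh ((y - x) / Real.sqrt 2) := by
      rw [Real.abs_sinh, ← Real.cosh_abs]
      exact (Real.sinh_lt_cosh _).le
    have hW4 : ‖auxW x y‖ ≤ 4 * (sech ((x + y) / Real.sqrt 2) * sech ((y - x) / Real.sqrt 2)) := by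
      unfold auxW sech
      have hdenpos : (0:ℝ) < Real.sqrt 2 * Real.cosh ((x + y) / Real.sqrt 2) ^ 4
          * Real.cosh ((y - x) / Real.sqrt 2) ^ 2 := by positivity
      rw [Real.norm_eq_abs, abs_div, abs_of_pos hdenpos, div_le_iff₀ hdenpos]
      have habs : |-3 * Real.sinh ((x + y) / Real.sqrt 2) * Real.cosh ((y - x) / Real.sqrt 2)
          + Real.cosh ((x + y) / Real.sqrt 2) * Real.sinh ((y - x) / Real.sqrt 2)|
          ≤ 4 * (Real.cosh ((x + y) / Real.sqrt 2) * Real.cosh ((y - x) / Real.sqrt 2)) := by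
        refine (abs_add_le _ _).trans ?_
        rw [abs_mul, abs_mul, abs_mul]
        rw [abs_of_pos (Real.cosh_pos ((y - x) / Real.sqrt 2))]
        rw [abs_of_pos (Real.cosh_pos ((x + y) / Real.sqrt 2))]
        norm_num
        nlinarith
      refine habs.trans ?_
      have h12 : (1:ℝ) ≤ Real.sqrt 2 := by
        nlinarith [Real.sq_sqrt (show (0:ℝ) ≤ 2 by norm_num), hs2]
      have hgoal : 4 * (Real.cosh ((x + y) / Real.sqrt 2) * Real.cosh ((y - x) / Real.sqrt 2))
          ≤ 4 * (1 / Real.cosh ((x + y) / Real.sqrt 2) * (1 / Real.cosh ((y - x) / Real.sqrt 2))) *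
            (Real.sqrt 2 * Real.cosh ((x + y) / Real.sqrt 2) ^ 4 * Real.cosh ((y - x) / Real.sqrt 2) ^ 2) := by
        have he : 4 * (1 / Real.cosh ((x + y) / Real.sqrt 2) * (1 / Real.cosh ((y - x) / Real.sqrt 2))) *
            (Real.sqrt 2 * Real.cosh ((x + y) / Real.sqrt 2) ^ 4 * Real.cosh ((y - x) / Real.sqrt 2) ^ 2)
            = 4 * Real.sqrt 2 * (Real.cosh ((x + y) / Real.sqrt 2) ^ 3 * Real.cosh ((y - x) / Real.sqrt 2)) := by
          field_simp
        rw [he]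
        have hca3 : Real.cosh ((x + y) / Real.sqrt 2) ≤ Real.cosh ((x + y) / Real.sqrt 2) ^ 3 := by
          have hsq : 1 ≤ Real.cosh ((x + y) / Real.sqrt 2) ^ 2 := by nlinarith [hca]
          calc Real.cosh ((x + y) / Real.sqrt 2)
              = Real.cosh ((x + y) / Real.sqrt 2) * 1 := (mul_one _).symm
            _ ≤ Real.cosh ((x + y) / Real.sqrt 2) * Real.cosh ((x + y) / Real.sqrt 2) ^ 2 :=
                mul_le_mul_of_nonneg_left hsq (by linarith)
            _ = Real.cosh ((x + y) / Real.sqrt 2) ^ 3 := by ring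
        have t1 : Real.cosh ((x + y) / Real.sqrt 2) * Real.cosh ((y - x) / Real.sqrt 2)
            ≤ Real.cosh ((x + y) / Real.sqrt 2) ^ 3 * Real.cosh ((y - x) / Real.sqrt 2) :=
          mul_le_mul_of_nonneg_right hca3 (Real.cosh_pos _).le
        have t2 : Real.cosh ((x + y) / Real.sqrt 2) ^ 3 * Real.cosh ((y - x) / Real.sqrt 2)
            ≤ Real.sqrt 2 * (Real.cosh ((x + y) / Real.sqrt 2) ^ 3 * Real.cosh ((y - x) / Real.sqrt 2)) := by
          nlinarith [mul_pos (pow_pos (Real.cosh_pos ((x + y) / Real.sqrt 2)) 3)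
            (Real.cosh_pos ((y - x) / Real.sqrt 2))]
        nlinarith [t1, t2]
      exact hgoal
    calc ‖auxW x y‖ ≤ 4 * (sech ((x + y) / Real.sqrt 2) * sech ((y - x) / Real.sqrt 2)) := hW4
      _ ≤ 4 * (4 * Real.exp (-Real.sqrt 2 * |y|)) := by nlinarith
      _ = 16 * Real.exp (-Real.sqrt 2 * |y|) := by ring
  have hexptendsTop : Filter.Tendsto (fun y : ℝ => 16 * Real.exp (-Real.sqrt 2 * |y|))
      Filter.atTop (nhds 0) := by
    have h1 : Filter.Tendsto (fun y : ℝ => -Real.sqrt 2 * |y|) Filter.atTop Filter.atBot := by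
      have := (Filter.tendsto_abs_atTop_atTop).const_mul_atTop hs2
      have h2 : Filter.Tendsto (fun y : ℝ => -(Real.sqrt 2 * |y|)) Filter.atTop Filter.atBot :=
        Filter.tendsto_neg_atTop_atBot.comp this
      simpa [neg_mul] using h2
    have := Real.tendsto_exp_atBot.comp h1
    simpa using this.const_mul (16:ℝ)
  have hexptendsBot : Filter.Tendsto (fun y : ℝ => 16 * Real.exp (-Real.sqrt 2 * |y|))
      Filter.atBot (nhds 0) := by
    have h1 : Filter.Tendsto (fun y : ℝ => -Real.sqrt 2 * |y|) Filter.atBot Filter.atBot := by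
      have := (Filter.tendsto_abs_atBot_atTop).const_mul_atTop hs2
      have h2 : Filter.Tendsto (fun y : ℝ => -(Real.sqrt 2 * |y|)) Filter.atBot Filter.atBot :=
        Filter.tendsto_neg_atTop_atBot.comp this
      simpa [neg_mul] using h2
    have := Real.tendsto_exp_atBot.comp h1
    simpa using this.const_mul (16:ℝ)
  have hWtop : Filter.Tendsto (auxW x) Filter.atTop (nhds 0) :=
    squeeze_zero_norm hWbnd hexptendsTop
  have hWbot : Filter.Tendsto (auxW x) Filter.atBot (nhds 0) :=
    squeeze_zero_norm hWbnd hexptendsBot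
  -- FTC on the real line
  have hFTC : (∫ y, (Φ y + P y)) = 0 - 0 :=
    MeasureTheory.integral_of_hasDerivAt_of_tendsto hderiv (hintΦ.add hintP) hWbot hWtop
  have hsplit : (∫ y, (Φ y + P y)) = (∫ y, Φ y) + ∫ y, P y :=
    MeasureTheory.integral_add hintΦ hintP
  -- positivity of ∫ P
  have hPnonneg : ∀ y : ℝ, 0 ≤ P y := fun y =>
    (mul_pos (pow_pos (sech_pos _) 3) (pow_pos (sech_pos _) 3)).le
  have hPpos : 0 < ∫ y, P y := by
    refine (MeasureTheory.integral_pos_iff_support_of_nonneg hPnonneg hintP).mpr ?_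
    have hsupp : Function.support P = Set.univ := by
      ext y
      simp only [Function.mem_support, Set.mem_univ, iff_true]
      exact (mul_pos (pow_pos (sech_pos ((x + y) / Real.sqrt 2)) 3)
        (pow_pos (sech_pos ((y - x) / Real.sqrt 2)) 3)).ne'
    rw [hsupp]
    simp
  have : (∫ y, Φ y) = -∫ y, P y := by linarith [hFTC, hsplit]
  rw [hΦ] at this
  rw [this]
  linarith
end

section
/- For every x > 0, −3 sinh(4x) + 4x cosh(4x) + 8x > 0. -/
open Real

lemma aux_pos (f f' : ℝ → ℝ) (hf : ∀ y, HasDerivAt f (f' y) y) (h0 : f 0 = 0)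
    (hd : ∀ y, 0 < y → 0 < f' y) {x : ℝ} (hx : 0 < x) : 0 < f x := by
  have hmono : StrictMonoOn f (Set.Ici 0) := by
    apply strictMonoOn_of_deriv_pos (convex_Ici 0)
    · exact fun y _ => (hf y).continuousAt.continuousWithinAt
    · intro y hy
      rw [interior_Ici] at hy
      rw [(hf y).deriv]
      exact hd y hy
  have := hmono (by simp : (0:ℝ) ∈ Set.Ici 0) (le_of_lt hx) hx
  rwa [h0] at this

lemma l3 {x : ℝ} (hx : 0 < x) : 0 < x * Real.cosh x - Real.sinh x := by
  refine aux_pos (fun y => y * Real.cosh y - Real.sinh y) (fun y => y * Real.sinh y)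
    (fun y => ?_) (by simp) (fun y hy => mul_pos hy (Real.sinh_pos_iff.2 hy)) hx
  have h := ((hasDerivAt_id y).mul (Real.hasDerivAt_cosh y)).sub (Real.hasDerivAt_sinh y)
  refine h.congr_deriv ?_
  simp only [id_eq]; ring

lemma l2 {x : ℝ} (hx : 0 < x) : 0 < x * Real.sinh x + 2 - 2 * Real.cosh x := by
  refine aux_pos (fun y => y * Real.sinh y + 2 - 2 * Real.cosh y)
    (fun y => y * Real.cosh y - Real.sinh y) (fun y => ?_) (by norm_num)
    (fun y hy => l3 hy) hx
  have h := (((hasDerivAt_id y).mul (Real.hasDerivAt_sinh y)).add_const 2).sub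
    ((Real.hasDerivAt_cosh y).const_mul 2)
  refine h.congr_deriv ?_
  simp only [id_eq]; ring

lemma l1 {x : ℝ} (hx : 0 < x) : 0 < -3 * Real.sinh x + x * Real.cosh x + 2 * x := by
  refine aux_pos (fun y => -3 * Real.sinh y + y * Real.cosh y + 2 * y)
    (fun y => y * Real.sinh y + 2 - 2 * Real.cosh y) (fun y => ?_) (by simp)
    (fun y hy => l2 hy) hx
  have h := (((Real.hasDerivAt_sinh y).const_mul (-3)).add
    ((hasDerivAt_id y).mul (Real.hasDerivAt_cosh y))).add ((hasDerivAt_id y).const_mul 2)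
  refine h.congr_deriv ?_
  simp only [id_eq]; ring

theorem stmt_17 (x : ℝ) (hx : 0 < x) :
    0 < -3 * Real.sinh (4 * x) + 4 * x * Real.cosh (4 * x) + 8 * x := by
  have := l1 (by linarith : 0 < 4 * x)
  linarith
end

section
/- Let a ≥ 1, let ṽ₁ = ( (−(a−1) − √((a−1)² + 4))/2 , 1 ) — an eigenvector of the matrix [[1,1],[1,a]] for its smaller eigenvalue — and let v₁ = ṽ₁/‖ṽ₁‖₂ be its normalization. Let w₂ = (1,1)/√2. Then |⟨w₂, v₁⟩| ≤ (1/√2) · ((a−1)/2) · (1 + (1/2)·((a−1)/2)). -/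
/-- Euclidean norm on `ℝ × ℝ`. -/
noncomputable def enorm2 (p : ℝ × ℝ) : ℝ := Real.sqrt (p.1 ^ 2 + p.2 ^ 2)

/-- Euclidean inner product on `ℝ × ℝ`. -/
def dot (p q : ℝ × ℝ) : ℝ := p.1 * q.1 + p.2 * q.2

theorem stmt_19 (a : ℝ) (ha : 1 ≤ a) :
    let vt : ℝ × ℝ := ((-(a - 1) - Real.sqrt ((a - 1) ^ 2 + 4)) / 2, 1)
    let v1 := (enorm2 vt)⁻¹ • vt
    let w2 : ℝ × ℝ := (1 / Real.sqrt 2, 1 / Real.sqrt 2)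
    |dot w2 v1| ≤ 1 / Real.sqrt 2 * ((a - 1) / 2) * (1 + 1 / 2 * ((a - 1) / 2)) := by
  intro vt v1 w2
  have ha0 : (0:ℝ) ≤ a - 1 := by linarith
  set s := Real.sqrt ((a - 1) ^ 2 + 4) with hsdef
  have hs2 : 2 ≤ s := by
    rw [hsdef, show (2:ℝ) = Real.sqrt 4 by
      rw [show (4:ℝ) = 2^2 by norm_num, Real.sqrt_sq]; norm_num]
    exact Real.sqrt_le_sqrt (by nlinarith)
  have hsle : s ≤ 2 + (a-1)^2/4 := by
    rw [hsdef]
    have h := Real.sqrt_le_sqrt (show (a-1)^2+4 ≤ (2+(a-1)^2/4)^2 by nlinarith)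
    rwa [Real.sqrt_sq (by positivity)] at h
  have hx : vt.1 = -(((a-1)+s)/2) := by simp only [vt]; ring
  have hc1 : 1 ≤ ((a-1)+s)/2 := by linarith
  have hn : enorm2 vt = Real.sqrt (vt.1^2 + 1) := by simp [enorm2, vt]
  have hn1 : 1 ≤ enorm2 vt := by
    rw [hn, show (1:ℝ) = Real.sqrt 1 by simp]
    refine Real.sqrt_le_sqrt ?_
    rw [hx, Real.sqrt_one]; nlinarith
  have hnpos : 0 < enorm2 vt := lt_of_lt_of_le one_pos hn1
  have hninv : (enorm2 vt)⁻¹ ≤ 1 := by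
    rw [inv_le_one_iff₀]; right; exact hn1
  have hninv0 : 0 ≤ (enorm2 vt)⁻¹ := le_of_lt (inv_pos.mpr hnpos)
  have hsqrt2 : (0:ℝ) < Real.sqrt 2 := Real.sqrt_pos.mpr (by norm_num)
  have hdot : dot w2 v1 = 1 / Real.sqrt 2 * ((enorm2 vt)⁻¹ * (vt.1 + 1)) := by
    simp only [dot, v1, w2, Prod.smul_fst, Prod.smul_snd, smul_eq_mul]
    ring
  have habs : |dot w2 v1| = 1 / Real.sqrt 2 * ((enorm2 vt)⁻¹ * (((a-1)+s)/2 - 1)) := by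
    rw [hdot, abs_mul, abs_mul, abs_of_nonneg (by positivity : (0:ℝ) ≤ 1 / Real.sqrt 2),
      abs_of_nonneg hninv0, abs_of_nonpos (by rw [hx]; linarith), hx]
    ring_nf
  rw [habs, mul_assoc]
  refine mul_le_mul_of_nonneg_left ?_ (by positivity)
  have h1 : (enorm2 vt)⁻¹ * (((a-1)+s)/2 - 1) ≤ ((a-1)+s)/2 - 1 := by
    nlinarith
  nlinarith
end
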